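/- arXiv:2307.05295 — 2 statements merged into one kernel-verified Lean document; each statement's English description precedes it below -/
import Mathlib

section
/- Let a, a₀ ∈ ℂ and b, b₀ > 0, and set γ₀ = |a₀|²/b₀. Then log(1 + |a|²/b) ≥ log(1+γ₀) − γ₀ + (2/b₀)·Re(a₀* · a) − (γ₀/(b₀ + |a₀|²))·(b + |a|²), where a₀* denotes complex conjugation and log is the natural logarithm. -/
theorem shannon_rate_quadratic_minorant (a a₀ : ℂ) (b b₀ : ℝ) (hb : 0 < b) (hb₀ : 0 < b₀) :
    Real.log (1 + ‖a₀‖ ^ 2 / b₀) - ‖a₀‖ ^ 2 / b₀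
      + (2 / b₀) * ((starRingEnd ℂ a₀) * a).re
      - (‖a₀‖ ^ 2 / b₀) / (b₀ + ‖a₀‖ ^ 2) * (b + ‖a‖ ^ 2)
    ≤ Real.log (1 + ‖a‖ ^ 2 / b) := by
  set A := ‖a‖ with hA
  set A₀ := ‖a₀‖ with hA₀
  have hA0 : 0 ≤ A := norm_nonneg a
  have hA₀0 : 0 ≤ A₀ := norm_nonneg a₀
  have hr : ((starRingEnd ℂ a₀) * a).re ≤ A₀ * A := by
    calc ((starRingEnd ℂ a₀) * a).re ≤ ‖(starRingEnd ℂ a₀) * a‖ :=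
          Complex.re_le_norm _
      _ = A₀ * A := by rw [norm_mul, Complex.norm_conj]
  have hs : 0 < b + A ^ 2 := by positivity
  have hs₀ : 0 < b₀ + A₀ ^ 2 := by positivity
  have hγ : 0 < 1 + A ^ 2 / b := by positivity
  have hγ₀ : 0 < 1 + A₀ ^ 2 / b₀ := by positivity
  -- Step A: concavity of log
  have hlog : Real.log (1 + A₀ ^ 2 / b₀) - Real.log (1 + A ^ 2 / b)
      ≤ (1 + A₀ ^ 2 / b₀) / (1 + A ^ 2 / b) - 1 := by
    have h := Real.log_le_sub_one_of_pos
      (show (0:ℝ) < (1 + A₀ ^ 2 / b₀) / (1 + A ^ 2 / b) by positivity)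
    rwa [Real.log_div (ne_of_gt hγ₀) (ne_of_gt hγ)] at h
  -- Step B: quadratic-over-linear bound, slack is a perfect square
  have key : 2 * A₀ * A / b₀ - A₀ ^ 2 / b₀ - (A₀ ^ 2 / b₀) / (b₀ + A₀ ^ 2) * (b + A ^ 2)
      ≤ 1 - (1 + A₀ ^ 2 / b₀) / (1 + A ^ 2 / b) := by
    have heq : (1 - (1 + A₀ ^ 2 / b₀) / (1 + A ^ 2 / b))
        - (2 * A₀ * A / b₀ - A₀ ^ 2 / b₀ - (A₀ ^ 2 / b₀) / (b₀ + A₀ ^ 2) * (b + A ^ 2))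
        = (A * (b₀ + A₀ ^ 2) - A₀ * (b + A ^ 2)) ^ 2 / (b₀ * (b₀ + A₀ ^ 2) * (b + A ^ 2)) := by
      field_simp
      ring
    have hnn : 0 ≤ (A * (b₀ + A₀ ^ 2) - A₀ * (b + A ^ 2)) ^ 2
        / (b₀ * (b₀ + A₀ ^ 2) * (b + A ^ 2)) := by positivity
    linarith
  have h2 : (2 / b₀) * ((starRingEnd ℂ a₀) * a).re ≤ 2 * A₀ * A / b₀ := by
    have hpos : (0:ℝ) ≤ 2 / b₀ := by positivity
    have h := mul_le_mul_of_nonneg_left hr hpos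
    have he : 2 / b₀ * (A₀ * A) = 2 * A₀ * A / b₀ := by ring
    linarith
  linarith
end

section
/- Let Θ = [[θ₁₁, θ₁₂],[θ₁₂, θ₂₂]] be a 2×2 complex symmetric matrix with Θ·Θᴴ = I and θ₁₂ ≠ 0. Then |θ₁₁| = |θ₂₂| and θ₂₂ = −θ₁₁* · e^{2i·arg(θ₁₂)}, where θ₁₁* is the complex conjugate of θ₁₁ and arg(θ₁₂) is the argument of θ₁₂. -/
open Matrix in
theorem bdris_unitary_phase_relation (θ11 θ12 θ22 : ℂ)
    (hU : !![θ11, θ12; θ12, θ22] * (!![θ11, θ12; θ12, θ22])ᴴ = 1)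
    (h12 : θ12 ≠ 0) :
    ‖θ11‖ = ‖θ22‖ ∧
    θ22 = -(starRingEnd ℂ θ11) * Complex.exp (2 * Complex.I * (θ12.arg : ℂ)) := by
  have h00 := congrFun (congrFun hU 0) 0
  have h10 := congrFun (congrFun hU 1) 0
  have h11 := congrFun (congrFun hU 1) 1
  simp [Matrix.mul_apply, Fin.sum_univ_two, Matrix.one_apply] at h00 h10 h11
  have hc12 : (starRingEnd ℂ) θ12 ≠ 0 := by simpa using h12
  have habs12 : ((‖θ12‖ : ℝ) : ℂ) ≠ 0 := by
    exact_mod_cast norm_ne_zero_iff.mpr h12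
  have habs : ‖θ11‖ = ‖θ22‖ := by
    have h1 : θ11 * (starRingEnd ℂ) θ11 = θ22 * (starRingEnd ℂ) θ22 := by
      linear_combination h00 - h11
    rw [Complex.mul_conj, Complex.mul_conj] at h1
    have h2 : Complex.normSq θ11 = Complex.normSq θ22 := by exact_mod_cast h1
    rw [← Complex.sq_norm, ← Complex.sq_norm] at h2
    nlinarith [norm_nonneg θ11, norm_nonneg θ22, sq_nonneg (‖θ11‖ - ‖θ22‖), sq_nonneg (‖θ11‖ + ‖θ22‖)]
  refine ⟨habs, ?_⟩
  have he : Complex.exp ((θ12.arg : ℂ) * Complex.I) = θ12 / ((‖θ12‖ : ℝ) : ℂ) := by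
    rw [eq_div_iff habs12, mul_comm]
    exact Complex.norm_mul_exp_arg_mul_I θ12
  have hsq : (((‖θ12‖ : ℝ) : ℂ))^2 = θ12 * (starRingEnd ℂ) θ12 := by
    rw [Complex.mul_conj, ← Complex.sq_norm]
    norm_cast
  have hexp : Complex.exp (2 * Complex.I * (θ12.arg : ℂ)) = θ12 / (starRingEnd ℂ) θ12 := by
    have : (2 : ℂ) * Complex.I * (θ12.arg : ℂ) =
        (θ12.arg : ℂ) * Complex.I + (θ12.arg : ℂ) * Complex.I := by ring
    rw [this, Complex.exp_add, he, div_mul_div_comm,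
      div_eq_div_iff (mul_ne_zero habs12 habs12) hc12]
    linear_combination -θ12*hsq
  have hfin : θ22 = -(starRingEnd ℂ) θ11 * θ12 / (starRingEnd ℂ) θ12 := by
    rw [eq_div_iff hc12]
    linear_combination h10
  rw [hexp, ← mul_div_assoc]
  exact hfin
end
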